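/- The sequence of eigenvalues produced by the fixed-point scheme is monotone non-increasing: if u_i with ‖u_i‖₂ = 1 attains λ_i(κ) = inf over {u ∈ H¹(𝒞), ‖u‖₂ = 1} of ∫|∇u|² − κ∫V_{i−1}|u|², and V_i := |u_i|^{p−2}/‖u_i‖ₚ^{p−2}, then λ_{i+1}(κ) ≤ λ_i(κ). -/

import Mathlib

open MeasureTheory Metric

noncomputable section

/-- The cylinder `𝒞 = ℝ × S^{d-1}`. -/
abbrev Cyl (d : ℕ) := ℝ × sphere (0 : EuclideanSpace ℝ (Fin d)) 1

/-- The uniform probability measure on the unit sphere `S^{d-1}`. -/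
noncomputable def sphProb (d : ℕ) : Measure (sphere (0 : EuclideanSpace ℝ (Fin d)) 1) :=
  ((volume : Measure (EuclideanSpace ℝ (Fin d))).toSphere Set.univ)⁻¹ •
    (volume : Measure (EuclideanSpace ℝ (Fin d))).toSphere

/-- The measure on the cylinder: Lebesgue measure times the uniform probability
measure on the sphere. -/
noncomputable def cylMeasure (d : ℕ) : Measure (Cyl d) :=
  (volume : Measure ℝ).prod (sphProb d)

/-- The lowest eigenvalue of the Schrödinger operator `-Δ - κV` on `H¹(𝒞)`:
`λ(V) = inf {∫|∇u|² - κ∫V|u|² : u ∈ H¹(𝒞), ‖u‖₂ = 1}`.  The Sobolev space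
`H¹(𝒞)` is represented by the set `H` of admissible functions together with the
Dirichlet energy `D u = ∫|∇u|²`. -/
def lamEig (d : ℕ) (κ : ℝ) (H : Set (Cyl d → ℝ)) (D : (Cyl d → ℝ) → ℝ)
    (V : Cyl d → ℝ) : ℝ :=
  sInf ((fun u => D u - κ * ∫ x, V x * (u x) ^ 2 ∂(cylMeasure d)) ''
    {u | u ∈ H ∧ (∫ x, (u x) ^ 2 ∂(cylMeasure d)) = 1})

theorem memLp_of_int {α : Type*} [MeasurableSpace α] {μ : Measure α} {g : α → ℝ} {q : ℝ}
    (hq0 : 0 < q) (hg0 : 0 ≤ g) (hgq : Integrable (fun x => g x ^ q) μ) :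
    MemLp g (ENNReal.ofReal q) μ := by
  have hqne : ENNReal.ofReal q ≠ 0 := by
    simp [ENNReal.ofReal_eq_zero, not_le, hq0]
  have hgm : AEMeasurable g μ := by
    have := hgq.1.aemeasurable.pow_const (1/q)
    refine this.congr (Filter.Eventually.of_forall fun x => ?_)
    show (g x ^ q) ^ (1/q) = g x
    rw [← Real.rpow_mul (hg0 x), mul_one_div, div_self hq0.ne', Real.rpow_one]
  have := (memLp_norm_rpow_iff (p := ENNReal.ofReal q) hgm.aestronglyMeasurable hqne
    ENNReal.ofReal_ne_top).mp ?_
  · exact this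
  · rw [ENNReal.div_self hqne ENNReal.ofReal_ne_top, memLp_one_iff_integrable]
    refine hgq.congr (Filter.Eventually.of_forall fun x => ?_)
    show g x ^ q = ‖g x‖ ^ (ENNReal.ofReal q).toReal
    rw [ENNReal.toReal_ofReal hq0.le, Real.norm_eq_abs, abs_of_nonneg (hg0 x)]


/-- One step of the fixed-point scheme does not increase the eigenvalue: if
`u_i` with `‖u_i‖₂ = 1` attains `λ_i(κ) = λ(V_{i-1})`, and
`V_i = |u_i|^(p-2)/‖u_i‖ₚ^(p-2)`, then `λ_{i+1}(κ) = λ(V_i) ≤ λ(V_{i-1}) = λ_i(κ)`. -/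
theorem stmt7 (d : ℕ) (hd : 2 ≤ d) (p q κ : ℝ) (hp : 2 < p) (hq : q = p / (p - 2))
    (hκ : 0 < κ) (H : Set (Cyl d → ℝ)) (D : (Cyl d → ℝ) → ℝ)
    (Vprev : Cyl d → ℝ) (hV0 : 0 ≤ Vprev)
    (hVq : Integrable (fun x => Vprev x ^ q) (cylMeasure d))
    (hVnorm : (∫ x, Vprev x ^ q ∂(cylMeasure d)) ^ (1 / q) = 1)
    (ui : Cyl d → ℝ) (hui : ui ∈ H)
    (hui2 : (∫ x, (ui x) ^ 2 ∂(cylMeasure d)) = 1)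
    (huip : Integrable (fun x => |ui x| ^ p) (cylMeasure d))
    (hppos : 0 < ∫ x, |ui x| ^ p ∂(cylMeasure d))
    (hVui : Integrable (fun x => Vprev x * (ui x) ^ 2) (cylMeasure d))
    (hattain : D ui - κ * (∫ x, Vprev x * (ui x) ^ 2 ∂(cylMeasure d)) =
      lamEig d κ H D Vprev)
    (hbdd : BddBelow ((fun u => D u -
        κ * ∫ x, (|ui x| ^ (p - 2) / ((∫ y, |ui y| ^ p ∂(cylMeasure d)) ^ (1 / p)) ^ (p - 2)) *
          (u x) ^ 2 ∂(cylMeasure d)) ''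
      {u | u ∈ H ∧ (∫ x, (u x) ^ 2 ∂(cylMeasure d)) = 1})) :
    lamEig d κ H D
        (fun x => |ui x| ^ (p - 2) /
          ((∫ y, |ui y| ^ p ∂(cylMeasure d)) ^ (1 / p)) ^ (p - 2)) ≤
      lamEig d κ H D Vprev := by
  set μ := cylMeasure d
  set I := ∫ x, |ui x| ^ p ∂μ with hI
  have hp0 : (0:ℝ) < p := by linarith
  have hp2 : (0:ℝ) < p - 2 := by linarith
  have hq0 : 0 < q := by rw [hq]; positivity
  -- the squared function, rewritten with |·|
  have hsq : ∀ x, (ui x) ^ 2 = |ui x| ^ (2:ℝ) := fun x => by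
    rw [Real.rpow_two, sq_abs]
  have hfp : ∀ x, ((ui x) ^ 2 : ℝ) ^ (p/2) = |ui x| ^ p := fun x => by
    rw [hsq x, ← Real.rpow_mul (abs_nonneg _)]
    congr 1; field_simp
  -- conjugate exponents
  have hconj : (p/2).HolderConjugate q := by
    rw [Real.holderConjugate_iff_eq_conjExponent (by rw [lt_div_iff₀ (by norm_num : (0:ℝ) < 2)]; linarith)]
    have : p - 2 ≠ 0 := hp2.ne'
    rw [hq, show p / 2 - 1 = (p - 2) / 2 by ring]; field_simp
  -- MemLp facts
  have hf : MemLp (fun x => (ui x) ^ 2) (ENNReal.ofReal (p/2)) μ := by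
    refine memLp_of_int (by linarith) (fun x => sq_nonneg _) ?_
    refine huip.congr (Filter.Eventually.of_forall fun x => ?_)
    exact (hfp x).symm
  have hg : MemLp Vprev (ENNReal.ofReal q) μ := memLp_of_int hq0 hV0 hVq
  -- Hölder
  have hHolder : (∫ x, Vprev x * (ui x) ^ 2 ∂μ) ≤ I ^ (2/p) := by
    have h := integral_mul_le_Lp_mul_Lq_of_nonneg hconj
      (Filter.Eventually.of_forall fun x => sq_nonneg (ui x))
      (Filter.Eventually.of_forall fun x => hV0 x) hf hg
    calc (∫ x, Vprev x * (ui x) ^ 2 ∂μ)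
        = ∫ x, (ui x) ^ 2 * Vprev x ∂μ := by
          simp_rw [mul_comm]
      _ ≤ (∫ x, ((ui x) ^ 2 : ℝ) ^ (p/2) ∂μ) ^ (1/(p/2)) *
            (∫ x, Vprev x ^ q ∂μ) ^ (1/q) := h
      _ = I ^ (2/p) := by
          rw [hVnorm, mul_one]
          congr 1
          · exact integral_congr_ae (Filter.Eventually.of_forall fun x => hfp x)
          · rw [one_div_div]
  -- value of the new potential at u_i
  have hVi : (∫ x, (|ui x| ^ (p - 2) / (I ^ (1 / p)) ^ (p - 2)) * (ui x) ^ 2 ∂μ)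
      = I ^ (2/p) := by
    have hptwise : ∀ x, (|ui x| ^ (p - 2) / (I ^ (1 / p)) ^ (p - 2)) * (ui x) ^ 2
        = |ui x| ^ p / (I ^ (1 / p)) ^ (p - 2) := fun x => by
      rw [div_mul_eq_mul_div]
      congr 1
      rw [hsq x, ← Real.rpow_add' (abs_nonneg _) (by norm_num [hp0.ne'] : p - 2 + 2 ≠ 0)]
      norm_num
    rw [integral_congr_ae (Filter.Eventually.of_forall hptwise), integral_div, ← hI,
      ← Real.rpow_mul hppos.le, one_div_mul_eq_div,
      show (2/p : ℝ) = 1 - (p-2)/p by field_simp; ring,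
      Real.rpow_sub hppos, Real.rpow_one]
  -- putting it together
  have hmem : D ui - κ * ∫ x, (|ui x| ^ (p - 2) / (I ^ (1 / p)) ^ (p - 2)) * (ui x) ^ 2 ∂μ
      ∈ ((fun u => D u -
        κ * ∫ x, (|ui x| ^ (p - 2) / (I ^ (1 / p)) ^ (p - 2)) * (u x) ^ 2 ∂μ) ''
      {u | u ∈ H ∧ (∫ x, (u x) ^ 2 ∂μ) = 1}) := ⟨ui, ⟨hui, hui2⟩, rfl⟩
  have h1 : lamEig d κ H D
      (fun x => |ui x| ^ (p - 2) / (I ^ (1 / p)) ^ (p - 2)) ≤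
      D ui - κ * ∫ x, (|ui x| ^ (p - 2) / (I ^ (1 / p)) ^ (p - 2)) * (ui x) ^ 2 ∂μ :=
    csInf_le hbdd hmem
  rw [← hattain]
  refine h1.trans ?_
  rw [hVi]
  have := mul_le_mul_of_nonneg_left hHolder hκ.le
  linarith


end
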